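/- For α > 0 and D ≥ 2, the operators U(π)|1⟩⟨1|U(π)* and U(π)|d_{O'}(α)⟩⟨d_{O'}(α)|U(π)*, with π ranging over S_D and d_{O'}(α) = α(e^{−iπ/8}|1⟩ + e^{iπ/8}|2⟩), span the full operator space L(ℂ^D). In particular, for m ≠ n, |m⟩⟨n| lies in their span via |m⟩⟨n| = 2^{−3/2}[(A+B) + i(A−B)] where A = e^{−iπ/4}|m⟩⟨n| + e^{iπ/4}|n⟩⟨m| and B = e^{iπ/4}|m⟩⟨n| + e^{−iπ/4}|n⟩⟨m|. -/

import Mathlib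

open ContinuousLinearMap
noncomputable section

/-- The permutation representation of `S_D` on `ℂ^D`: `U(π)|n⟩ = |π(n)⟩`. -/
def permU (D : ℕ) (π : Equiv.Perm (Fin D)) :
    EuclideanSpace ℂ (Fin D) →L[ℂ] EuclideanSpace ℂ (Fin D) :=
  ∑ n : Fin D,
    (innerSL ℂ (EuclideanSpace.single n (1 : ℂ))).smulRight
      (EuclideanSpace.single (π n) (1 : ℂ))

/-- The rank-one operator `|u⟩⟨v|` on `ℂ^D`. -/
def ketbraD (D : ℕ) (u v : EuclideanSpace ℂ (Fin D)) :
    EuclideanSpace ℂ (Fin D) →L[ℂ] EuclideanSpace ℂ (Fin D) :=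
  (innerSL ℂ v).smulRight u

/- ### Auxiliary lemmas -/

lemma ketbraD_apply (D : ℕ) (u v x : EuclideanSpace ℂ (Fin D)) :
    ketbraD D u v x = (inner ℂ v x : ℂ) • u := rfl

lemma permU_apply_single (D : ℕ) (π : Equiv.Perm (Fin D)) (n : Fin D) :
    permU D π (EuclideanSpace.single n (1 : ℂ)) = EuclideanSpace.single (π n) (1 : ℂ) := by
  simp only [permU, ContinuousLinearMap.sum_apply, ContinuousLinearMap.smulRight_apply,
    innerSL_apply_apply]
  rw [Fintype.sum_eq_single n]
  · simp [EuclideanSpace.inner_single_left, EuclideanSpace.single_apply]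
  · intro m hm
    simp [EuclideanSpace.inner_single_left, EuclideanSpace.single_apply, Ne.symm hm]

lemma conj_ketbra (D : ℕ) (P : EuclideanSpace ℂ (Fin D) →L[ℂ] EuclideanSpace ℂ (Fin D))
    (u v : EuclideanSpace ℂ (Fin D)) :
    P ∘L ketbraD D u v ∘L adjoint P = ketbraD D (P u) (P v) := by
  ext x
  simp only [ContinuousLinearMap.comp_apply, ketbraD_apply, map_smul]
  rw [ContinuousLinearMap.adjoint_inner_right]

lemma exp_neg_pi_div_four : Complex.exp (-(Real.pi / 4 : ℝ) * Complex.I) =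
    ((Real.sqrt 2 / 2 : ℝ) : ℂ) * (1 - Complex.I) := by
  rw [show (-(Real.pi / 4 : ℝ) * Complex.I : ℂ) = ((-(Real.pi/4) : ℝ) : ℂ) * Complex.I by
    push_cast; ring, Complex.exp_mul_I]
  rw [← Complex.ofReal_cos, ← Complex.ofReal_sin, Real.cos_neg, Real.sin_neg,
    Real.cos_pi_div_four, Real.sin_pi_div_four]
  push_cast
  ring

lemma exp_pi_div_four : Complex.exp ((Real.pi / 4 : ℝ) * Complex.I) =
    ((Real.sqrt 2 / 2 : ℝ) : ℂ) * (1 + Complex.I) := by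
  rw [show ((Real.pi / 4 : ℝ) * Complex.I : ℂ) = ((Real.pi/4 : ℝ) : ℂ) * Complex.I by
    push_cast; ring, Complex.exp_mul_I]
  rw [← Complex.ofReal_cos, ← Complex.ofReal_sin, Real.cos_pi_div_four, Real.sin_pi_div_four]
  push_cast
  ring

/-- The key scalar combination identity for part 2 of the theorem. -/
lemma ketbra_combo (D : ℕ) (M N : EuclideanSpace ℂ (Fin D) →L[ℂ] EuclideanSpace ℂ (Fin D)) :
    M = (((2 * Real.sqrt 2)⁻¹ : ℝ) : ℂ) •
      (((Complex.exp (-(Real.pi / 4 : ℝ) * Complex.I) • M +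
          Complex.exp ((Real.pi / 4 : ℝ) * Complex.I) • N) +
        (Complex.exp ((Real.pi / 4 : ℝ) * Complex.I) • M +
          Complex.exp (-(Real.pi / 4 : ℝ) * Complex.I) • N)) +
      Complex.I • ((Complex.exp (-(Real.pi / 4 : ℝ) * Complex.I) • M +
          Complex.exp ((Real.pi / 4 : ℝ) * Complex.I) • N) -
        (Complex.exp ((Real.pi / 4 : ℝ) * Complex.I) • M +
          Complex.exp (-(Real.pi / 4 : ℝ) * Complex.I) • N))) := by
  have hs : ((Real.sqrt 2 : ℝ) : ℂ) ^ 2 = 2 := by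
    norm_cast
    rw [Real.sq_sqrt] <;> norm_num
  have hs0 : ((Real.sqrt 2 : ℝ) : ℂ) ≠ 0 := by
    intro h
    rw [h] at hs; norm_num at hs
  rw [exp_neg_pi_div_four, exp_pi_div_four]
  match_scalars
  · field_simp
    linear_combination 2 * Complex.I_sq
  · field_simp
    linear_combination -2 * Complex.I_sq

lemma euclid_repr (D : ℕ) (x : EuclideanSpace ℂ (Fin D)) :
    x = ∑ i, x i • EuclideanSpace.single i (1:ℂ) := by
  ext j
  have : (∑ i, x i • EuclideanSpace.single i (1:ℂ)) j
      = ∑ i, (x i • EuclideanSpace.single i (1:ℂ)) j :=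
    by rw [WithLp.ofLp_sum, Finset.sum_apply]
  rw [this]
  simp [EuclideanSpace.single_apply]

lemma clm_eq_sum (D : ℕ) (T : EuclideanSpace ℂ (Fin D) →L[ℂ] EuclideanSpace ℂ (Fin D)) :
    T = ∑ m : Fin D, ∑ n : Fin D, (T (EuclideanSpace.single n (1:ℂ)) m) •
      ketbraD D (EuclideanSpace.single m (1:ℂ)) (EuclideanSpace.single n (1:ℂ)) := by
  refine ContinuousLinearMap.ext fun x => ?_
  have hx : T x = ∑ n, x n • T (EuclideanSpace.single n (1:ℂ)) := by
    conv_lhs => rw [euclid_repr D x]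
    rw [map_sum]
    simp
  rw [hx]
  simp only [ContinuousLinearMap.sum_apply, ContinuousLinearMap.smul_apply, ketbraD_apply,
    EuclideanSpace.inner_single_left, map_one, one_mul]
  rw [Finset.sum_comm]
  refine Finset.sum_congr rfl fun n _ => ?_
  conv_lhs => rw [euclid_repr D (T (EuclideanSpace.single n 1))]
  rw [Finset.smul_sum]
  refine Finset.sum_congr rfl fun m _ => ?_
  rw [smul_smul, smul_smul, mul_comm]

lemma ketbra_expand (D : ℕ) (a b c d : ℂ) (u v u' v' : EuclideanSpace ℂ (Fin D)) :
    ketbraD D (a•u + b•v) (c•u' + d•v') =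
      (a * (starRingEnd ℂ) c) • ketbraD D u u' + (a * (starRingEnd ℂ) d) • ketbraD D u v' +
      (b * (starRingEnd ℂ) c) • ketbraD D v u' + (b * (starRingEnd ℂ) d) • ketbraD D v v' := by
  refine ContinuousLinearMap.ext fun x => ?_
  simp only [ketbraD_apply, ContinuousLinearMap.add_apply, ContinuousLinearMap.smul_apply,
    inner_add_left, inner_smul_left]
  module

lemma perm_exists (D : ℕ) (hD : 1 < D) (m n : Fin D) (hmn : m ≠ n) :
    ∃ π : Equiv.Perm (Fin D), π ⟨0, by omega⟩ = m ∧ π ⟨1, by omega⟩ = n := by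
  set z : Fin D := ⟨0, by omega⟩
  set o : Fin D := ⟨1, by omega⟩
  set σ := Equiv.swap z m with hσ
  set k := σ.symm n with hk
  have hkz : k ≠ z := by
    intro h
    apply hmn
    have := congrArg σ h
    rw [hk, Equiv.apply_symm_apply, Equiv.swap_apply_left] at this
    exact this.symm
  have hoz : o ≠ z := by
    intro h; simp [o, z, Fin.ext_iff] at h
  refine ⟨σ * Equiv.swap o k, ?_, ?_⟩
  · show σ (Equiv.swap o k z) = m
    rw [Equiv.swap_apply_of_ne_of_ne (Ne.symm hoz) (Ne.symm hkz), Equiv.swap_apply_left]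
  · show σ (Equiv.swap o k o) = n
    rw [Equiv.swap_apply_left, hk, Equiv.apply_symm_apply]

lemma conj_exp_mul_I (t : ℝ) :
    (starRingEnd ℂ) (Complex.exp ((t:ℂ) * Complex.I)) = Complex.exp (-(t:ℂ) * Complex.I) := by
  rw [← Complex.exp_conj]
  congr 1
  simp [Complex.conj_I]

lemma conj_e8m : (starRingEnd ℂ) (Complex.exp (-(Real.pi/8:ℝ) * Complex.I)) =
    Complex.exp ((Real.pi/8:ℝ) * Complex.I) := by
  have := conj_exp_mul_I (-(Real.pi/8))
  push_cast at this ⊢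
  rw [this]; ring_nf

lemma conj_e8p : (starRingEnd ℂ) (Complex.exp ((Real.pi/8:ℝ) * Complex.I)) =
    Complex.exp (-(Real.pi/8:ℝ) * Complex.I) := by
  have := conj_exp_mul_I (Real.pi/8)
  push_cast at this ⊢
  rw [this]

lemma e8m_mul_e8m : Complex.exp (-(Real.pi/8:ℝ) * Complex.I) *
    Complex.exp (-(Real.pi/8:ℝ) * Complex.I) = Complex.exp (-(Real.pi/4:ℝ) * Complex.I) := by
  rw [← Complex.exp_add]; congr 1; push_cast; ring

lemma e8p_mul_e8p : Complex.exp ((Real.pi/8:ℝ) * Complex.I) *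
    Complex.exp ((Real.pi/8:ℝ) * Complex.I) = Complex.exp ((Real.pi/4:ℝ) * Complex.I) := by
  rw [← Complex.exp_add]; congr 1; push_cast; ring

lemma e8m_mul_e8p : Complex.exp (-(Real.pi/8:ℝ) * Complex.I) *
    Complex.exp ((Real.pi/8:ℝ) * Complex.I) = 1 := by
  rw [← Complex.exp_add,
    show (-(Real.pi/8:ℝ) * Complex.I + (Real.pi/8:ℝ) * Complex.I : ℂ) = 0 by ring,
    Complex.exp_zero]

/-- For `α > 0` the operators `U(π)|1⟩⟨1|U(π)*` and
`U(π)|d_{O'}(α)⟩⟨d_{O'}(α)|U(π)*`, `π ∈ S_D`, span all of `L(ℂ^D)`; in particular,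
for `m ≠ n`, `|m⟩⟨n| = 2^{-3/2}[(A+B) + i(A−B)]` with
`A = e^{-iπ/4}|m⟩⟨n| + e^{iπ/4}|n⟩⟨m|` and `B = e^{iπ/4}|m⟩⟨n| + e^{-iπ/4}|n⟩⟨m|`. -/
theorem covariant_family_informationally_complete (D : ℕ) (hD : 2 ≤ D)
    (α : ℝ) (hα : 0 < α)
    (dO' : EuclideanSpace ℂ (Fin D))
    (hdO' : dO' = (α : ℂ) •
      (Complex.exp (-(Real.pi / 8 : ℝ) * Complex.I) •
          EuclideanSpace.single (⟨0, by omega⟩ : Fin D) (1 : ℂ) +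
        Complex.exp ((Real.pi / 8 : ℝ) * Complex.I) •
          EuclideanSpace.single (⟨1, by omega⟩ : Fin D) (1 : ℂ))) :
    (Submodule.span ℂ
        ({A | ∃ π : Equiv.Perm (Fin D), A =
            permU D π ∘L
              ketbraD D (EuclideanSpace.single (⟨0, by omega⟩ : Fin D) (1 : ℂ))
                (EuclideanSpace.single (⟨0, by omega⟩ : Fin D) (1 : ℂ)) ∘L
              adjoint (permU D π)} ∪
         {A | ∃ π : Equiv.Perm (Fin D), A =
            permU D π ∘L ketbraD D dO' dO' ∘L adjoint (permU D π)} :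
          Set (EuclideanSpace ℂ (Fin D) →L[ℂ] EuclideanSpace ℂ (Fin D))) = ⊤) ∧
    (∀ m n : Fin D, m ≠ n →
      ketbraD D (EuclideanSpace.single m (1 : ℂ)) (EuclideanSpace.single n (1 : ℂ)) =
        (((2 * Real.sqrt 2)⁻¹ : ℝ) : ℂ) •
          (((Complex.exp (-(Real.pi / 4 : ℝ) * Complex.I) •
                ketbraD D (EuclideanSpace.single m (1 : ℂ))
                  (EuclideanSpace.single n (1 : ℂ)) +
              Complex.exp ((Real.pi / 4 : ℝ) * Complex.I) •
                ketbraD D (EuclideanSpace.single n (1 : ℂ))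
                  (EuclideanSpace.single m (1 : ℂ))) +
            (Complex.exp ((Real.pi / 4 : ℝ) * Complex.I) •
                ketbraD D (EuclideanSpace.single m (1 : ℂ))
                  (EuclideanSpace.single n (1 : ℂ)) +
              Complex.exp (-(Real.pi / 4 : ℝ) * Complex.I) •
                ketbraD D (EuclideanSpace.single n (1 : ℂ))
                  (EuclideanSpace.single m (1 : ℂ)))) +
          Complex.I •
            ((Complex.exp (-(Real.pi / 4 : ℝ) * Complex.I) •
                ketbraD D (EuclideanSpace.single m (1 : ℂ))
                  (EuclideanSpace.single n (1 : ℂ)) +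
              Complex.exp ((Real.pi / 4 : ℝ) * Complex.I) •
                ketbraD D (EuclideanSpace.single n (1 : ℂ))
                  (EuclideanSpace.single m (1 : ℂ))) -
            (Complex.exp ((Real.pi / 4 : ℝ) * Complex.I) •
                ketbraD D (EuclideanSpace.single m (1 : ℂ))
                  (EuclideanSpace.single n (1 : ℂ)) +
              Complex.exp (-(Real.pi / 4 : ℝ) * Complex.I) •
                ketbraD D (EuclideanSpace.single n (1 : ℂ))
                  (EuclideanSpace.single m (1 : ℂ)))))) := by
  constructor
  · rw [eq_top_iff]
    intro T _
    -- diagonal elements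
    have hA : ∀ k : Fin D,
        ketbraD D (EuclideanSpace.single k (1:ℂ)) (EuclideanSpace.single k (1:ℂ)) ∈
          Submodule.span ℂ
            ({A | ∃ π : Equiv.Perm (Fin D), A =
                permU D π ∘L
                  ketbraD D (EuclideanSpace.single (⟨0, by omega⟩ : Fin D) (1 : ℂ))
                    (EuclideanSpace.single (⟨0, by omega⟩ : Fin D) (1 : ℂ)) ∘L
                  adjoint (permU D π)} ∪
             {A | ∃ π : Equiv.Perm (Fin D), A =
                permU D π ∘L ketbraD D dO' dO' ∘L adjoint (permU D π)} :
              Set (EuclideanSpace ℂ (Fin D) →L[ℂ] EuclideanSpace ℂ (Fin D))) := by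
      intro k
      refine Submodule.subset_span (Or.inl ⟨Equiv.swap (⟨0, by omega⟩ : Fin D) k, ?_⟩)
      rw [conj_ketbra, permU_apply_single, Equiv.swap_apply_left]
    -- off-diagonal combination elements
    have hE : ∀ m n : Fin D, m ≠ n →
        Complex.exp (-(Real.pi/4:ℝ) * Complex.I) •
            ketbraD D (EuclideanSpace.single m (1:ℂ)) (EuclideanSpace.single n (1:ℂ)) +
          Complex.exp ((Real.pi/4:ℝ) * Complex.I) •
            ketbraD D (EuclideanSpace.single n (1:ℂ)) (EuclideanSpace.single m (1:ℂ)) ∈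
          Submodule.span ℂ
            ({A | ∃ π : Equiv.Perm (Fin D), A =
                permU D π ∘L
                  ketbraD D (EuclideanSpace.single (⟨0, by omega⟩ : Fin D) (1 : ℂ))
                    (EuclideanSpace.single (⟨0, by omega⟩ : Fin D) (1 : ℂ)) ∘L
                  adjoint (permU D π)} ∪
             {A | ∃ π : Equiv.Perm (Fin D), A =
                permU D π ∘L ketbraD D dO' dO' ∘L adjoint (permU D π)} :
              Set (EuclideanSpace ℂ (Fin D) →L[ℂ] EuclideanSpace ℂ (Fin D))) := by
      intro m n hmn
      obtain ⟨π, h0, h1⟩ := perm_exists D hD m n hmn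
      have hP : permU D π dO' =
          ((α:ℂ) * Complex.exp (-(Real.pi/8:ℝ) * Complex.I)) • EuclideanSpace.single m (1:ℂ) +
          ((α:ℂ) * Complex.exp ((Real.pi/8:ℝ) * Complex.I)) • EuclideanSpace.single n (1:ℂ) := by
        rw [hdO', map_smul, map_add, map_smul, map_smul, permU_apply_single, permU_apply_single,
          h0, h1, smul_add, smul_smul, smul_smul]
      have hX : permU D π ∘L ketbraD D dO' dO' ∘L adjoint (permU D π) =
          ((α:ℂ)^2) • ketbraD D (EuclideanSpace.single m (1:ℂ)) (EuclideanSpace.single m (1:ℂ)) +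
          ((α:ℂ)^2 * Complex.exp (-(Real.pi/4:ℝ) * Complex.I)) •
            ketbraD D (EuclideanSpace.single m (1:ℂ)) (EuclideanSpace.single n (1:ℂ)) +
          ((α:ℂ)^2 * Complex.exp ((Real.pi/4:ℝ) * Complex.I)) •
            ketbraD D (EuclideanSpace.single n (1:ℂ)) (EuclideanSpace.single m (1:ℂ)) +
          ((α:ℂ)^2) • ketbraD D (EuclideanSpace.single n (1:ℂ)) (EuclideanSpace.single n (1:ℂ)) := by
        rw [conj_ketbra, hP, ketbra_expand]
        have c1 : ((α:ℂ) * Complex.exp (-(Real.pi/8:ℝ) * Complex.I)) *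
            (starRingEnd ℂ) ((α:ℂ) * Complex.exp (-(Real.pi/8:ℝ) * Complex.I)) = (α:ℂ)^2 := by
          rw [map_mul, Complex.conj_ofReal, conj_e8m]
          linear_combination ((α:ℂ))^2 * e8m_mul_e8p
        have c2 : ((α:ℂ) * Complex.exp (-(Real.pi/8:ℝ) * Complex.I)) *
            (starRingEnd ℂ) ((α:ℂ) * Complex.exp ((Real.pi/8:ℝ) * Complex.I)) =
            (α:ℂ)^2 * Complex.exp (-(Real.pi/4:ℝ) * Complex.I) := by
          rw [map_mul, Complex.conj_ofReal, conj_e8p]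
          linear_combination ((α:ℂ))^2 * e8m_mul_e8m
        have c3 : ((α:ℂ) * Complex.exp ((Real.pi/8:ℝ) * Complex.I)) *
            (starRingEnd ℂ) ((α:ℂ) * Complex.exp (-(Real.pi/8:ℝ) * Complex.I)) =
            (α:ℂ)^2 * Complex.exp ((Real.pi/4:ℝ) * Complex.I) := by
          rw [map_mul, Complex.conj_ofReal, conj_e8m]
          linear_combination ((α:ℂ))^2 * e8p_mul_e8p
        have c4 : ((α:ℂ) * Complex.exp ((Real.pi/8:ℝ) * Complex.I)) *
            (starRingEnd ℂ) ((α:ℂ) * Complex.exp ((Real.pi/8:ℝ) * Complex.I)) = (α:ℂ)^2 := by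
          rw [map_mul, Complex.conj_ofReal, conj_e8p]
          linear_combination ((α:ℂ))^2 * e8m_mul_e8p
        rw [c1, c2, c3, c4]
      have hXmem : permU D π ∘L ketbraD D dO' dO' ∘L adjoint (permU D π) ∈
          Submodule.span ℂ
            ({A | ∃ π : Equiv.Perm (Fin D), A =
                permU D π ∘L
                  ketbraD D (EuclideanSpace.single (⟨0, by omega⟩ : Fin D) (1 : ℂ))
                    (EuclideanSpace.single (⟨0, by omega⟩ : Fin D) (1 : ℂ)) ∘L
                  adjoint (permU D π)} ∪
             {A | ∃ π : Equiv.Perm (Fin D), A =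
                permU D π ∘L ketbraD D dO' dO' ∘L adjoint (permU D π)} :
              Set (EuclideanSpace ℂ (Fin D) →L[ℂ] EuclideanSpace ℂ (Fin D))) :=
        Submodule.subset_span (Or.inr ⟨π, rfl⟩)
      rw [hX] at hXmem
      have hα0 : ((α:ℂ))^2 ≠ 0 :=
        pow_ne_zero 2 (by exact_mod_cast ne_of_gt hα)
      have key : Complex.exp (-(Real.pi/4:ℝ) * Complex.I) •
            ketbraD D (EuclideanSpace.single m (1:ℂ)) (EuclideanSpace.single n (1:ℂ)) +
          Complex.exp ((Real.pi/4:ℝ) * Complex.I) •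
            ketbraD D (EuclideanSpace.single n (1:ℂ)) (EuclideanSpace.single m (1:ℂ)) =
          (((α:ℂ)^2)⁻¹) •
            (((α:ℂ)^2) • ketbraD D (EuclideanSpace.single m (1:ℂ)) (EuclideanSpace.single m (1:ℂ)) +
            ((α:ℂ)^2 * Complex.exp (-(Real.pi/4:ℝ) * Complex.I)) •
              ketbraD D (EuclideanSpace.single m (1:ℂ)) (EuclideanSpace.single n (1:ℂ)) +
            ((α:ℂ)^2 * Complex.exp ((Real.pi/4:ℝ) * Complex.I)) •
              ketbraD D (EuclideanSpace.single n (1:ℂ)) (EuclideanSpace.single m (1:ℂ)) +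
            ((α:ℂ)^2) • ketbraD D (EuclideanSpace.single n (1:ℂ)) (EuclideanSpace.single n (1:ℂ))) -
          ketbraD D (EuclideanSpace.single m (1:ℂ)) (EuclideanSpace.single m (1:ℂ)) -
          ketbraD D (EuclideanSpace.single n (1:ℂ)) (EuclideanSpace.single n (1:ℂ)) := by
        match_scalars <;> field_simp [show (α:ℂ) ≠ 0 by exact_mod_cast ne_of_gt hα] <;> ring
      rw [key]
      exact sub_mem (sub_mem (Submodule.smul_mem _ _ hXmem) (hA m)) (hA n)
    -- every operator is in the span
    rw [clm_eq_sum D T]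
    refine Submodule.sum_mem _ fun m _ => Submodule.sum_mem _ fun n _ =>
      Submodule.smul_mem _ _ ?_
    by_cases h : m = n
    · subst h; exact hA m
    · have h1 := hE m n h
      have h2 := hE n m (Ne.symm h)
      rw [ketbra_combo D
        (ketbraD D (EuclideanSpace.single m (1:ℂ)) (EuclideanSpace.single n (1:ℂ)))
        (ketbraD D (EuclideanSpace.single n (1:ℂ)) (EuclideanSpace.single m (1:ℂ)))]
      have h2' : Complex.exp ((Real.pi/4:ℝ) * Complex.I) •
            ketbraD D (EuclideanSpace.single m (1:ℂ)) (EuclideanSpace.single n (1:ℂ)) +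
          Complex.exp (-(Real.pi/4:ℝ) * Complex.I) •
            ketbraD D (EuclideanSpace.single n (1:ℂ)) (EuclideanSpace.single m (1:ℂ)) ∈
          Submodule.span ℂ
            ({A | ∃ π : Equiv.Perm (Fin D), A =
                permU D π ∘L
                  ketbraD D (EuclideanSpace.single (⟨0, by omega⟩ : Fin D) (1 : ℂ))
                    (EuclideanSpace.single (⟨0, by omega⟩ : Fin D) (1 : ℂ)) ∘L
                  adjoint (permU D π)} ∪
             {A | ∃ π : Equiv.Perm (Fin D), A =
                permU D π ∘L ketbraD D dO' dO' ∘L adjoint (permU D π)} :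
              Set (EuclideanSpace ℂ (Fin D) →L[ℂ] EuclideanSpace ℂ (Fin D))) := by
        rwa [add_comm] at h2
      exact Submodule.smul_mem _ _ (add_mem (add_mem h1 h2')
        (Submodule.smul_mem _ _ (sub_mem h1 h2')))
  · intro m n _
    exact ketbra_combo D _ _
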